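/- Let Λ be a coherent frame, and equip the set Sp(Λ) of prime elements of Λ with the Stone topology, whose open sets are the sets U(a) = {p ∈ Sp(Λ) | ¬ a ≤ p} for a ∈ Λ. Then a subset of Sp(Λ) is quasi-compact and open if and only if it equals U(c) for some compact element c ∈ Λ. In particular, since ⊤ is compact, the space Sp(Λ) is quasi-compact. -/

import Mathlib

open CompleteLattice

/-- An element `p` of a lattice with top is prime if `p ≠ ⊤` and
`x ⊓ y ≤ p` implies `x ≤ p` or `y ≤ p`. -/
def IsPrimeElem {Λ : Type*} [Lattice Λ] [OrderTop Λ] (p : Λ) : Prop :=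
  p ≠ ⊤ ∧ ∀ x y : Λ, x ⊓ y ≤ p → x ≤ p ∨ y ≤ p

/-- The set of prime elements of a frame. -/
abbrev Sp (Λ : Type*) [Order.Frame Λ] := {p : Λ // IsPrimeElem p}

/-- The basic open subset of the spectrum associated to an element of the frame. -/
def U {Λ : Type*} [Order.Frame Λ] (a : Λ) : Set (Sp Λ) := {p : Sp Λ | ¬ a ≤ (p : Λ)}

/-- The Stone topology on the spectrum of a frame. -/
instance (Λ : Type*) [Order.Frame Λ] : TopologicalSpace (Sp Λ) :=
  TopologicalSpace.generateFrom (Set.range (U (Λ := Λ)))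

section aux

variable {Λ : Type*} [Order.Frame Λ]

lemma U_mono {a b : Λ} (h : a ≤ b) : U a ⊆ U b := fun _ hp hb => hp (h.trans hb)

lemma U_isOpen (a : Λ) : IsOpen (U a) :=
  TopologicalSpace.isOpen_generateFrom_of_mem ⟨a, rfl⟩

lemma isOpen_iff {s : Set (Sp Λ)} : IsOpen s ↔ ∃ a : Λ, s = U a := by
  constructor
  · intro h
    induction h with
    | basic t ht => obtain ⟨a, rfl⟩ := ht; exact ⟨a, rfl⟩
    | univ =>
      refine ⟨⊤, ?_⟩
      ext p
      simp only [U, Set.mem_setOf_eq, Set.mem_univ, true_iff, top_le_iff]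
      exact p.2.1
    | inter t₁ t₂ h₁ h₂ ih₁ ih₂ =>
      obtain ⟨a, rfl⟩ := ih₁
      obtain ⟨b, rfl⟩ := ih₂
      refine ⟨a ⊓ b, ?_⟩
      ext p
      simp only [U, Set.mem_setOf_eq, Set.mem_inter_iff]
      constructor
      · rintro ⟨ha, hb⟩ hab
        rcases p.2.2 a b hab with h | h
        · exact ha h
        · exact hb h
      · intro h
        constructor
        · exact fun ha => h (le_trans inf_le_left ha)
        · exact fun hb => h (le_trans inf_le_right hb)
    | sUnion S _ ih =>
      refine ⟨sSup {a : Λ | U a ∈ S}, ?_⟩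
      ext p
      simp only [Set.mem_sUnion, U, Set.mem_setOf_eq, sSup_le_iff, not_forall]
      constructor
      · rintro ⟨t, htS, hpt⟩
        obtain ⟨a, rfl⟩ := ih t htS
        exact ⟨a, htS, hpt⟩
      · rintro ⟨a, haS, hpa⟩
        exact ⟨U a, haS, hpa⟩
  · rintro ⟨a, rfl⟩; exact U_isOpen a

/-- Separation: a compact element not below `b` is kept off by a prime above `b`. -/
lemma exists_prime {c b : Λ} (hc : IsCompactElement c) (hcb : ¬ c ≤ b) :
    ∃ p : Sp Λ, b ≤ (p : Λ) ∧ ¬ c ≤ (p : Λ) := by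
  set T : Set Λ := {q | b ≤ q ∧ ¬ c ≤ q} with hT
  have ih : ∀ C ⊆ T, IsChain (· ≤ ·) C → ∀ y ∈ C, ∃ ub ∈ T, ∀ z ∈ C, z ≤ ub := by
    intro C hCT hC y hyC
    refine ⟨sSup C, ⟨(hCT hyC).1.trans (le_sSup hyC), ?_⟩, fun z hz => le_sSup hz⟩
    intro hcs
    rw [isCompactElement_iff_le_of_directed_sSup_le] at hc
    obtain ⟨z, hzC, hcz⟩ := hc C ⟨y, hyC⟩ hC.directedOn hcs
    exact (hCT hzC).2 hcz
  obtain ⟨m, -, hmax⟩ := zorn_le_nonempty₀ T ih b ⟨le_rfl, hcb⟩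
  · obtain ⟨hbm, hcm⟩ := hmax.prop
    have hmax := hmax.2
    have hprime : IsPrimeElem m := by
      constructor
      · rintro rfl; exact hcm le_top
      · intro x y hxy
        by_contra h
        push_neg at h
        obtain ⟨hx, hy⟩ := h
        have hx' : c ≤ m ⊔ x := by
          by_contra hcx
          have : m ⊔ x ∈ T := ⟨hbm.trans le_sup_left, hcx⟩
          have := hmax this le_sup_left
          exact hx (le_sup_right.trans this)
        have hy' : c ≤ m ⊔ y := by
          by_contra hcy
          have : m ⊔ y ∈ T := ⟨hbm.trans le_sup_left, hcy⟩
          have := hmax this le_sup_left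
          exact hy (le_sup_right.trans this)
        have : c ≤ m ⊔ (x ⊓ y) := by
          rw [sup_inf_left]
          exact le_inf hx' hy'
        exact hcm (this.trans (sup_le le_rfl hxy))
    exact ⟨⟨m, hprime⟩, hbm, hcm⟩

lemma le_of_U_subset {c b : Λ} (hc : IsCompactElement c) (h : U c ⊆ U b) : c ≤ b := by
  by_contra hcb
  obtain ⟨p, hbp, hcp⟩ := exists_prime hc hcb
  exact (h hcp) hbp

lemma isCompact_U {c : Λ} (hc : IsCompactElement c) : IsCompact (U c) := by
  classical
  refine isCompact_of_finite_subcover fun V hV hcov => ?_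
  choose a ha using fun i => isOpen_iff.mp (hV i)
  have hle : c ≤ sSup (Set.range a) := by
    apply le_of_U_subset hc
    intro p hp
    obtain ⟨i, hpi⟩ := Set.mem_iUnion.mp (hcov hp)
    rw [ha i] at hpi
    exact fun hsup => hpi ((_root_.le_sSup (Set.mem_range_self i)).trans hsup)
  obtain ⟨t, hts, hct⟩ := (isCompactElement_iff_exists_le_sSup_of_le_sSup (k := c)).mp hc (Set.range a) hle
  have hch : ∀ x ∈ t, ∃ i, a i = x := fun x hx => hts hx
  choose f hf using hch
  refine ⟨t.attach.image fun x => f x.1 x.2, ?_⟩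
  intro p hp
  have hex : ∃ x ∈ t, ¬ x ≤ (p : Λ) := by
    by_contra h
    push_neg at h
    exact hp (hct.trans (Finset.sup_le fun x hx => h x hx))
  obtain ⟨x, hxt, hxp⟩ := hex
  refine Set.mem_iUnion₂.mpr ⟨f x hxt, Finset.mem_image.mpr ⟨⟨x, hxt⟩, Finset.mem_attach _ _, rfl⟩, ?_⟩
  have hVx : V (f x hxt) = U x := by rw [ha, hf]
  rw [hVx]
  exact hxp

end aux

theorem stmt13 {Λ : Type*} [Order.Frame Λ] [IsCompactlyGenerated Λ]
    (htop : IsCompactElement (⊤ : Λ))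
    (hinf : ∀ a b : Λ, IsCompactElement a → IsCompactElement b → IsCompactElement (a ⊓ b)) :
    (∀ s : Set (Sp Λ),
        (IsCompact s ∧ IsOpen s) ↔ ∃ c : Λ, IsCompactElement c ∧ s = U c) ∧
    CompactSpace (Sp Λ) := by
  have main : ∀ s : Set (Sp Λ),
      (IsCompact s ∧ IsOpen s) ↔ ∃ c : Λ, IsCompactElement c ∧ s = U c := by
    intro s
    constructor
    · rintro ⟨hs, hopen⟩
      obtain ⟨a, rfl⟩ := isOpen_iff.mp hopen
      -- cover U a by U d for compact d ≤ a
      set K := {d : Λ | IsCompactElement d ∧ d ≤ a} with hK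
      have hcov : U a ⊆ ⋃ d : K, U (d : Λ) := by
        intro p hp
        have : ¬ sSup K ≤ (p : Λ) := by rw [sSup_compact_le_eq]; exact hp
        simp only [sSup_le_iff, not_forall] at this
        obtain ⟨d, hdK, hdp⟩ := this
        exact Set.mem_iUnion.mpr ⟨⟨d, hdK⟩, hdp⟩
      obtain ⟨t, ht⟩ := hs.elim_finite_subcover (fun d : K => U (d : Λ))
        (fun d => U_isOpen _) hcov
      refine ⟨t.sup fun d => (d : Λ), isCompactElement_finsetSup t fun d _ => d.2.1, ?_⟩
      apply le_antisymm
      · intro p hp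
        obtain ⟨d, hdt, hdp⟩ := Set.mem_iUnion₂.mp (ht hp)
        exact fun h => hdp ((Finset.le_sup hdt).trans h)
      · exact U_mono (Finset.sup_le fun d _ => d.2.2)
    · rintro ⟨c, hc, rfl⟩
      exact ⟨isCompact_U hc, U_isOpen c⟩
  refine ⟨main, ?_⟩
  have : (Set.univ : Set (Sp Λ)) = U ⊤ := by
    ext p
    simp only [U, Set.mem_setOf_eq, Set.mem_univ, true_iff, top_le_iff]
    exact p.2.1
  constructor
  rw [this]
  exact isCompact_U htop
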